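/- Assume the CFL condition 0 ≤ λL ≤ 1. Let w⁰, v⁰ : ℤ → ℝ be bounded sequences with Σ_{i∈ℤ} |w⁰_i − v⁰_i| < ∞, and let w^{n+1} = G(w^n), v^{n+1} = G(v^n) be the scheme iterates. Then for every n ≥ 0 one has Σ_{i∈ℤ} |w^n_i − v^n_i| ≤ Σ_{i∈ℤ} |w⁰_i − v⁰_i| (in particular each difference is summable). -/

import Mathlib

set_option maxHeartbeats 1000000

open MeasureTheory

/-- One step of the filtered scheme:
`G(w)_i = w_i + λ Σ_{j ≥ i} I_{j-i} (W(w_{j+1}) - W(w_j))`. -/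
noncomputable def schemeStep (I : ℕ → ℝ) (W : ℝ → ℝ) (lam : ℝ) (w : ℤ → ℝ) (i : ℤ) : ℝ :=
  w i + lam * ∑' k : ℕ, I k * (W (w (i + (k : ℤ) + 1)) - W (w (i + (k : ℤ))))

lemma aux_abs (s L dd aa : ℝ) (hs : 0 ≤ s) (hsL : s * L ≤ 1)
    (hsign : 0 ≤ aa * dd) (hle : |aa| ≤ L * |dd|) :
    |dd - s * aa| = |dd| - s * |aa| := by
  rcases le_total 0 dd with h | h
  · have ha : 0 ≤ aa := by
      by_contra hc; push_neg at hc
      rw [abs_of_nonneg h, abs_of_neg hc] at hle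
      have h0 : aa * dd = 0 := le_antisymm (by nlinarith [mul_nonneg (neg_nonneg.2 hc.le) h]) hsign
      rcases mul_eq_zero.1 h0 with h' | h'
      · linarith
      · rw [h'] at hle; nlinarith
    rw [abs_of_nonneg h, abs_of_nonneg ha] at hle ⊢
    rw [abs_of_nonneg (by nlinarith : (0:ℝ) ≤ dd - s * aa)]
  · have ha : aa ≤ 0 := by
      by_contra hc; push_neg at hc
      rw [abs_of_nonpos h, abs_of_pos hc] at hle
      have h0 : aa * dd = 0 := le_antisymm (by nlinarith [mul_nonneg hc.le (neg_nonneg.2 h)]) hsign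
      rcases mul_eq_zero.1 h0 with h' | h'
      · linarith
      · rw [h'] at hle; nlinarith
    rw [abs_of_nonpos h, abs_of_nonpos ha] at hle ⊢
    rw [abs_of_nonpos (by nlinarith : dd - s * aa ≤ 0)]
    ring


lemma aux_I (Φ : ℝ → ℝ) (α Δz : ℝ) (hα : 0 < α) (hΔz : 0 < Δz)
    (hΦnonneg : ∀ z : ℝ, 0 ≤ z → 0 ≤ Φ z)
    (hΦmono : ∀ x y : ℝ, 0 ≤ x → x ≤ y → Φ y ≤ Φ x)
    (hΦmass : ∫ ζ in Set.Ioi (0:ℝ), Φ ζ = 1)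
    (I : ℕ → ℝ)
    (hI : ∀ k : ℕ, I k = ∫ ζ in ((k : ℝ) * Δz)..(((k : ℝ) + 1) * Δz), (1/α) * Φ (ζ/α)) :
    (∀ k, 0 ≤ I k) ∧ (∀ k, I (k+1) ≤ I k) ∧ Summable I ∧ I 0 ≤ 1 ∧ ∑' k, I k ≤ 1 := by
  set g : ℝ → ℝ := fun ζ => (1/α) * Φ (ζ/α) with hg
  have hganti : AntitoneOn g (Set.Ici (0:ℝ)) := by
    intro x hx y hy hxy
    have : Φ (y/α) ≤ Φ (x/α) := hΦmono _ _ (div_nonneg hx hα.le) (by gcongr)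
    have h1 : (0:ℝ) ≤ 1/α := by positivity
    exact mul_le_mul_of_nonneg_left this h1
  have hgint : ∀ a b : ℝ, 0 ≤ a → a ≤ b → IntervalIntegrable g volume a b := by
    intro a b ha hab
    apply AntitoneOn.intervalIntegrable
    apply hganti.mono
    rw [Set.uIcc_of_le hab]
    intro x hx; exact le_trans ha hx.1
  have hkk : ∀ k : ℕ, (0:ℝ) ≤ (k:ℝ) * Δz := fun k => by positivity
  have hkk' : ∀ k : ℕ, (k:ℝ) * Δz ≤ ((k:ℝ)+1) * Δz := fun k => by nlinarith
  have hInn : ∀ k, 0 ≤ I k := by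
    intro k; rw [hI k]
    apply intervalIntegral.integral_nonneg (hkk' k)
    intro u hu
    have h0u : 0 ≤ u := le_trans (hkk k) hu.1
    have := hΦnonneg (u/α) (div_nonneg h0u hα.le)
    positivity
  have hanti : ∀ k, I (k+1) ≤ I k := by
    intro k
    rw [hI k, hI (k+1)]
    push_cast
    have heq : (∫ ζ in (((k:ℝ)+1) * Δz)..(((k:ℝ)+1+1) * Δz), g ζ)
        = ∫ ζ in ((k:ℝ) * Δz)..(((k:ℝ)+1) * Δz), g (ζ + Δz) := by
      rw [intervalIntegral.integral_comp_add_right g Δz]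
      congr 1 <;> ring
    rw [heq]
    refine intervalIntegral.integral_mono_on (f := fun ζ => g (ζ + Δz)) (g := g) (hkk' k) ?_ ?_ ?_
    · have h1 := (hgint (↑k * Δz + Δz) ((↑k + 1) * Δz + Δz) (by positivity) (by nlinarith)).comp_add_right Δz
      simpa using h1
    · exact hgint _ _ (hkk k) (hkk' k)
    · intro x hx
      have h0x : 0 ≤ x := le_trans (hkk k) hx.1
      exact hganti (Set.mem_Ici.2 h0x) (Set.mem_Ici.2 (by linarith)) (by linarith)
  have hΦint : IntegrableOn Φ (Set.Ioi (0:ℝ)) := by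
    by_contra h
    rw [integral_undef h] at hΦmass
    exact one_ne_zero hΦmass.symm
  have hpartial : ∀ n : ℕ, ∑ k ∈ Finset.range n, I k ≤ 1 := by
    intro n
    have hsum : ∑ k ∈ Finset.range n, I k
        = ∫ ζ in ((0:ℝ))..((n:ℝ) * Δz), g ζ := by
      have := intervalIntegral.sum_integral_adjacent_intervals
        (f := g) (μ := volume) (a := fun k : ℕ => (k:ℝ) * Δz) (n := n)
        (fun k _ => hgint _ _ (hkk k) (by push_cast; exact hkk' k))
      simp only [Nat.cast_zero, zero_mul] at this
      rw [← this]
      apply Finset.sum_congr rfl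
      intro k _
      rw [hI k]; push_cast; rfl
    rw [hsum]
    have hcd : (∫ ζ in ((0:ℝ))..((n:ℝ) * Δz), g ζ)
        = ∫ u in ((0:ℝ))..((n:ℝ) * Δz / α), Φ u := by
      rw [hg]
      simp only [one_div]
      rw [intervalIntegral.integral_const_mul]
      rw [intervalIntegral.integral_comp_div (f := Φ) (hα.ne')]
      simp [smul_eq_mul]
      rw [← mul_assoc, inv_mul_cancel₀ hα.ne', one_mul]
    rw [hcd]
    have hT : 0 ≤ (n:ℝ) * Δz / α := by positivity
    rw [intervalIntegral.integral_of_le hT]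
    calc ∫ u in Set.Ioc (0:ℝ) ((n:ℝ)*Δz/α), Φ u
        ≤ ∫ u in Set.Ioi (0:ℝ), Φ u := by
          apply setIntegral_mono_set hΦint
          · filter_upwards [ae_restrict_mem measurableSet_Ioi] with x hx
            exact hΦnonneg x (le_of_lt hx)
          · exact HasSubset.Subset.eventuallyLE Set.Ioc_subset_Ioi_self
      _ = 1 := hΦmass
  have hS : Summable I := summable_of_sum_range_le hInn hpartial
  refine ⟨hInn, hanti, hS, ?_, hS.tsum_le_of_sum_range_le hpartial⟩
  have := hpartial 1
  simpa using this

lemma step_contract (I : ℕ → ℝ) (hInn : ∀ k, 0 ≤ I k) (hIanti : ∀ k, I (k+1) ≤ I k)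
    (hIs : Summable I) (hI01 : I 0 ≤ 1)
    (W : ℝ → ℝ) (L lam : ℝ)
    (hLip : ∀ x y : ℝ, |W x - W y| ≤ L * |x - y|)
    (hMono : Monotone W)
    (hlam0 : 0 ≤ lam) (hCFL : lam * L ≤ 1)
    (w v : ℤ → ℝ) (M : ℝ) (hwB : ∀ i, |w i| ≤ M) (hvB : ∀ i, |v i| ≤ M)
    (hd : Summable (fun i : ℤ => |w i - v i|)) :
    Summable (fun i : ℤ => |schemeStep I W lam w i - schemeStep I W lam v i|) ∧
    ∑' i : ℤ, |schemeStep I W lam w i - schemeStep I W lam v i| ≤ ∑' i : ℤ, |w i - v i| := by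
  have hL0 : 0 ≤ L := by
    have h1 := hLip 0 1
    have h2 := abs_nonneg (W 0 - W 1)
    have h3 : |(0:ℝ) - 1| = 1 := by norm_num
    rw [h3] at h1; nlinarith
  set a : ℤ → ℝ := fun j => W (w j) - W (v j) with ha_def
  set d : ℤ → ℝ := fun j => w j - v j with hd_def
  have haled : ∀ j, |a j| ≤ L * |d j| := fun j => hLip _ _
  have hsa : Summable (fun j : ℤ => |a j|) :=
    Summable.of_nonneg_of_le (fun j => abs_nonneg _) haled (hd.mul_left L)
  have hM0 : 0 ≤ M := le_trans (abs_nonneg _) (hwB 0)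
  have hdbd : ∀ j, |d j| ≤ 2 * M := by
    intro j
    have h1 := abs_le.1 (hwB j); have h2 := abs_le.1 (hvB j)
    show |w j - v j| ≤ 2 * M
    rw [abs_le]; constructor <;> nlinarith
  have habd : ∀ j, |a j| ≤ L * (2 * M) := fun j => le_trans (haled j)
    (by nlinarith [hdbd j])
  -- summability of the scheme series
  have hSgen : ∀ (u : ℤ → ℝ), (∀ j, |u j| ≤ M) → ∀ i : ℤ,
      Summable (fun k : ℕ => I k * (W (u (i + (k:ℤ) + 1)) - W (u (i + (k:ℤ))))) := by
    intro u hu i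
    apply Summable.of_norm_bounded (g := fun k => I k * (L * (2 * M))) (hIs.mul_right _)
    intro k
    rw [Real.norm_eq_abs, abs_mul, abs_of_nonneg (hInn k)]
    apply mul_le_mul_of_nonneg_left _ (hInn k)
    refine le_trans (hLip _ _) ?_
    have h1 := abs_le.1 (hu (i + (k:ℤ) + 1)); have h2 := abs_le.1 (hu (i + (k:ℤ)))
    have : |u (i + (k:ℤ) + 1) - u (i + (k:ℤ))| ≤ 2 * M := by
      rw [abs_le]; constructor <;> nlinarith
    nlinarith
  have hSa1 : ∀ i : ℤ, Summable (fun k : ℕ => I k * a (i + (k:ℤ) + 1)) := by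
    intro i
    apply Summable.of_norm_bounded (g := fun k => I k * (L * (2 * M))) (hIs.mul_right _)
    intro k
    rw [Real.norm_eq_abs, abs_mul, abs_of_nonneg (hInn k)]
    exact mul_le_mul_of_nonneg_left (habd _) (hInn k)
  have hSa0 : ∀ i : ℤ, Summable (fun k : ℕ => I k * a (i + (k:ℤ))) := by
    intro i
    apply Summable.of_norm_bounded (g := fun k => I k * (L * (2 * M))) (hIs.mul_right _)
    intro k
    rw [Real.norm_eq_abs, abs_mul, abs_of_nonneg (hInn k)]
    exact mul_le_mul_of_nonneg_left (habd _) (hInn k)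
  have hIs1 : Summable (fun k : ℕ => I (k+1)) := (summable_nat_add_iff 1).2 hIs
  have hSa1' : ∀ i : ℤ, Summable (fun k : ℕ => I (k+1) * a (i + (k:ℤ) + 1)) := by
    intro i
    apply Summable.of_norm_bounded (g := fun k => I (k+1) * (L * (2 * M))) (hIs1.mul_right _)
    intro k
    rw [Real.norm_eq_abs, abs_mul, abs_of_nonneg (hInn _)]
    exact mul_le_mul_of_nonneg_left (habd _) (hInn _)
  -- the key rewriting of the difference of two scheme steps
  have hE : ∀ i : ℤ, schemeStep I W lam w i - schemeStep I W lam v i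
      = (d i - (lam * I 0) * a i) + lam * ∑' k : ℕ, (I k - I (k+1)) * a (i + (k:ℤ) + 1) := by
    intro i
    have e1 : (∑' k : ℕ, I k * (W (w (i + (k:ℤ) + 1)) - W (w (i + (k:ℤ)))))
        - (∑' k : ℕ, I k * (W (v (i + (k:ℤ) + 1)) - W (v (i + (k:ℤ)))))
        = ∑' k : ℕ, (I k * a (i + (k:ℤ) + 1) - I k * a (i + (k:ℤ))) := by
      rw [← Summable.tsum_sub (hSgen w hwB i) (hSgen v hvB i)]
      apply tsum_congr; intro k
      simp only [ha_def]; ring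
    have e2 : (∑' k : ℕ, (I k * a (i + (k:ℤ) + 1) - I k * a (i + (k:ℤ))))
        = (∑' k : ℕ, I k * a (i + (k:ℤ) + 1)) - ∑' k : ℕ, I k * a (i + (k:ℤ)) :=
      Summable.tsum_sub (hSa1 i) (hSa0 i)
    have e3 : (∑' k : ℕ, I k * a (i + (k:ℤ)))
        = I 0 * a i + ∑' k : ℕ, I (k+1) * a (i + (k:ℤ) + 1) := by
      rw [Summable.tsum_eq_zero_add (hSa0 i)]
      norm_num
      apply tsum_congr; intro k
      push_cast
      ring_nf
    have e4 : (∑' k : ℕ, I k * a (i + (k:ℤ) + 1)) - (∑' k : ℕ, I (k+1) * a (i + (k:ℤ) + 1))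
        = ∑' k : ℕ, (I k - I (k+1)) * a (i + (k:ℤ) + 1) := by
      rw [← Summable.tsum_sub (hSa1 i) (hSa1' i)]
      apply tsum_congr; intro k; ring
    simp only [schemeStep]
    have : w i - v i = d i := rfl
    rw [show (w i + lam * ∑' k : ℕ, I k * (W (w (i + (k:ℤ) + 1)) - W (w (i + (k:ℤ)))))
        - (v i + lam * ∑' k : ℕ, I k * (W (v (i + (k:ℤ) + 1)) - W (v (i + (k:ℤ)))))
        = d i + lam * ((∑' k : ℕ, I k * (W (w (i + (k:ℤ) + 1)) - W (w (i + (k:ℤ)))))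
          - (∑' k : ℕ, I k * (W (v (i + (k:ℤ) + 1)) - W (v (i + (k:ℤ)))))) from by
      rw [hd_def]; ring]
    rw [e1, e2, e3, ← e4]
    ring
  -- pointwise absolute-value estimate
  have hs0 : 0 ≤ lam * I 0 := mul_nonneg hlam0 (hInn 0)
  have hsL : (lam * I 0) * L ≤ 1 := by nlinarith [hInn 0]
  have hsign : ∀ i : ℤ, 0 ≤ a i * d i := by
    intro i
    rcases le_total (w i) (v i) with h | h
    · have h1 : W (w i) ≤ W (v i) := hMono h
      have h2 : a i ≤ 0 := by show W (w i) - W (v i) ≤ 0; linarith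
      have h3 : d i ≤ 0 := by show w i - v i ≤ 0; linarith
      nlinarith [mul_nonneg (neg_nonneg.2 h2) (neg_nonneg.2 h3)]
    · have h1 : W (v i) ≤ W (w i) := hMono h
      have h2 : 0 ≤ a i := by show (0:ℝ) ≤ W (w i) - W (v i); linarith
      have h3 : 0 ≤ d i := by show (0:ℝ) ≤ w i - v i; linarith
      exact mul_nonneg h2 h3
  have hpt : ∀ i : ℤ, |d i - (lam * I 0) * a i| = |d i| - (lam * I 0) * |a i| :=
    fun i => aux_abs (lam * I 0) L (d i) (a i) hs0 hsL (hsign i) (haled i)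
  -- the double family
  set F : ℕ → ℤ → ℝ := fun k i => (I k - I (k+1)) * |a (i + (k:ℤ) + 1)| with hF_def
  have hJ : ∀ k, 0 ≤ I k - I (k+1) := fun k => sub_nonneg.2 (hIanti k)
  have hJs : Summable (fun k : ℕ => I k - I (k+1)) := hIs.sub hIs1
  have htel : ∑' k : ℕ, (I k - I (k+1)) = I 0 := by
    have h1 : ∑' k : ℕ, I k = I 0 + ∑' k : ℕ, I (k+1) := Summable.tsum_eq_zero_add hIs
    rw [Summable.tsum_sub hIs hIs1]; linarith
  set A := ∑' j : ℤ, |a j| with hA_def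
  have htrans : ∀ k : ℕ, Summable (fun i : ℤ => |a (i + (k:ℤ) + 1)|) ∧
      (∑' i : ℤ, |a (i + (k:ℤ) + 1)|) = A := by
    intro k
    have he : (fun i : ℤ => |a (i + (k:ℤ) + 1)|)
        = (fun j : ℤ => |a j|) ∘ (Equiv.addRight ((k:ℤ) + 1)) := by
      funext i
      simp [Equiv.coe_addRight, add_assoc]
    constructor
    · rw [he]; exact ((Equiv.addRight ((k:ℤ)+1)).summable_iff).2 hsa
    · rw [he]
      exact (Equiv.addRight ((k:ℤ)+1)).tsum_eq (fun j : ℤ => |a j|)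
  have hFk : ∀ k : ℕ, Summable (fun i : ℤ => F k i) := fun k =>
    ((htrans k).1.mul_left _)
  have hFktsum : ∀ k : ℕ, ∑' i : ℤ, F k i = (I k - I (k+1)) * A := by
    intro k
    rw [hF_def]
    rw [tsum_mul_left, (htrans k).2]
  have hFi : ∀ i : ℤ, Summable (fun k : ℕ => F k i) := by
    intro i
    apply Summable.of_nonneg_of_le (fun k => mul_nonneg (hJ k) (abs_nonneg _))
      (fun k => mul_le_mul_of_nonneg_left (habd _) (hJ k)) (hJs.mul_right _)
  have hFs : Summable (fun p : ℕ × ℤ => F p.1 p.2) := by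
    apply (summable_prod_of_nonneg ?_).2
    · exact ⟨fun k => hFk k, by
        apply Summable.congr (hJs.mul_right A)
        intro k; exact (hFktsum k).symm⟩
    · intro p; exact mul_nonneg (hJ p.1) (abs_nonneg _)
  have hswap : ∑' i : ℤ, ∑' k : ℕ, F k i = ∑' k : ℕ, ∑' i : ℤ, F k i :=
    Summable.tsum_comm' hFs hFk hFi
  have hRs : Summable (fun i : ℤ => ∑' k : ℕ, F k i) := by
    have h1 : Summable (fun p : ℤ × ℕ => F p.2 p.1) := hFs.prod_symm
    exact ((summable_prod_of_nonneg (fun p => mul_nonneg (hJ p.2) (abs_nonneg _))).1 h1).2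
  have hRtsum : ∑' i : ℤ, ∑' k : ℕ, F k i = I 0 * A := by
    rw [hswap, tsum_congr hFktsum, tsum_mul_right, htel]
  -- pointwise bound
  have hRnn : ∀ i : ℤ, 0 ≤ ∑' k : ℕ, F k i :=
    fun i => tsum_nonneg (fun k => mul_nonneg (hJ k) (abs_nonneg _))
  have hEb : ∀ i : ℤ, |schemeStep I W lam w i - schemeStep I W lam v i|
      ≤ (|d i| - (lam * I 0) * |a i|) + lam * ∑' k : ℕ, F k i := by
    intro i
    rw [hE i]
    refine le_trans (abs_add_le _ _) ?_
    rw [hpt i, abs_mul, abs_of_nonneg hlam0]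
    gcongr
    refine le_trans (norm_tsum_le_tsum_norm (f := fun k : ℕ => (I k - I (k+1)) * a (i + (k:ℤ) + 1)) ?_) ?_
    · apply Summable.congr (hFi i)
      intro k
      rw [hF_def, Real.norm_eq_abs, abs_mul, abs_of_nonneg (hJ k)]
    · apply le_of_eq
      apply tsum_congr; intro k
      rw [Real.norm_eq_abs, abs_mul, abs_of_nonneg (hJ k)]
  set B : ℤ → ℝ := fun i => (|d i| - (lam * I 0) * |a i|) + lam * ∑' k : ℕ, F k i with hB_def
  have hB1 : Summable (fun i : ℤ => |d i| - (lam * I 0) * |a i|) :=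
    hd.sub (hsa.mul_left _)
  have hBs : Summable B := hB1.add (hRs.mul_left lam)
  have hBtsum : ∑' i : ℤ, B i = ∑' i : ℤ, |d i| := by
    rw [hB_def]
    rw [Summable.tsum_add hB1 (hRs.mul_left lam), Summable.tsum_sub hd (hsa.mul_left _)]
    rw [tsum_mul_left, tsum_mul_left, hRtsum, ← hA_def]
    ring
  have hsE : Summable (fun i : ℤ => |schemeStep I W lam w i - schemeStep I W lam v i|) :=
    Summable.of_nonneg_of_le (fun i => abs_nonneg _) hEb hBs
  refine ⟨hsE, ?_⟩
  calc ∑' i : ℤ, |schemeStep I W lam w i - schemeStep I W lam v i|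
      ≤ ∑' i : ℤ, B i := Summable.tsum_le_tsum hEb hsE hBs
    _ = ∑' i : ℤ, |d i| := hBtsum

lemma step_bdd (I : ℕ → ℝ) (hInn : ∀ k, 0 ≤ I k) (hIs : Summable I) (hItsum : ∑' k, I k ≤ 1)
    (W : ℝ → ℝ) (L lam : ℝ) (hL0 : 0 ≤ L)
    (hLip : ∀ x y : ℝ, |W x - W y| ≤ L * |x - y|)
    (hlam0 : 0 ≤ lam)
    (u : ℤ → ℝ) (M : ℝ) (hu : ∀ j, |u j| ≤ M) :
    ∀ i : ℤ, |schemeStep I W lam u i| ≤ M + lam * (L * (2 * M)) := by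
  intro i
  have hM0 : 0 ≤ M := le_trans (abs_nonneg _) (hu 0)
  have hbd : ∀ k : ℕ, |I k * (W (u (i + (k:ℤ) + 1)) - W (u (i + (k:ℤ))))| ≤ I k * (L * (2 * M)) := by
    intro k
    rw [abs_mul, abs_of_nonneg (hInn k)]
    apply mul_le_mul_of_nonneg_left _ (hInn k)
    refine le_trans (hLip _ _) ?_
    have h1 := abs_le.1 (hu (i + (k:ℤ) + 1)); have h2 := abs_le.1 (hu (i + (k:ℤ)))
    have : |u (i + (k:ℤ) + 1) - u (i + (k:ℤ))| ≤ 2 * M := by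
      rw [abs_le]; constructor <;> nlinarith
    nlinarith
  have hsum : Summable (fun k : ℕ => I k * (W (u (i + (k:ℤ) + 1)) - W (u (i + (k:ℤ))))) :=
    Summable.of_norm_bounded (hIs.mul_right _) (fun k => by rw [Real.norm_eq_abs]; exact hbd k)
  have hnsum : Summable (fun k : ℕ => ‖I k * (W (u (i + (k:ℤ) + 1)) - W (u (i + (k:ℤ))))‖) :=
    Summable.of_nonneg_of_le (fun k => norm_nonneg _)
      (fun k => by rw [Real.norm_eq_abs]; exact hbd k) (hIs.mul_right _)
  have htsumbd : |∑' k : ℕ, I k * (W (u (i + (k:ℤ) + 1)) - W (u (i + (k:ℤ))))| ≤ L * (2 * M) := by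
    rw [← Real.norm_eq_abs]
    refine le_trans (norm_tsum_le_tsum_norm hnsum) ?_
    calc ∑' k : ℕ, ‖I k * (W (u (i + (k:ℤ) + 1)) - W (u (i + (k:ℤ))))‖
        ≤ ∑' k : ℕ, I k * (L * (2 * M)) := by
          refine Summable.tsum_le_tsum ?_ hnsum (hIs.mul_right _)
          intro k; rw [Real.norm_eq_abs]; exact hbd k
      _ = (∑' k : ℕ, I k) * (L * (2 * M)) := tsum_mul_right
      _ ≤ L * (2 * M) := by exact mul_le_of_le_one_left (by positivity) hItsum
  show |u i + lam * ∑' k : ℕ, I k * (W (u (i + (k:ℤ) + 1)) - W (u (i + (k:ℤ))))| ≤ M + lam * (L * (2 * M))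
  refine le_trans (abs_add_le _ _) ?_
  rw [abs_mul, abs_of_nonneg hlam0]
  have := hu i
  nlinarith [abs_nonneg (∑' k : ℕ, I k * (W (u (i + (k:ℤ) + 1)) - W (u (i + (k:ℤ)))))]


theorem stmt_1
    (Φ : ℝ → ℝ) (α Δz Δt lam L : ℝ)
    (hα : 0 < α) (hΔz : 0 < Δz) (hΔt : 0 < Δt) (hlam : lam = Δt / Δz)
    (hΦnonneg : ∀ z : ℝ, 0 ≤ z → 0 ≤ Φ z)
    (hΦmono : ∀ x y : ℝ, 0 ≤ x → x ≤ y → Φ y ≤ Φ x)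
    (hΦmass : ∫ ζ in Set.Ioi (0:ℝ), Φ ζ = 1)
    (hΦmom : IntegrableOn (fun ζ => ζ * Φ ζ) (Set.Ioi (0:ℝ)))
    (W : ℝ → ℝ) (hW : Differentiable ℝ W)
    (hW' : ∀ x : ℝ, 0 ≤ deriv W x ∧ deriv W x ≤ L)
    (hCFL : 0 ≤ lam * L ∧ lam * L ≤ 1)
    (I : ℕ → ℝ)
    (hI : ∀ k : ℕ, I k = ∫ ζ in ((k : ℝ) * Δz)..(((k : ℝ) + 1) * Δz), (1/α) * Φ (ζ/α))
    (w v : ℕ → ℤ → ℝ)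
    (hw0B : ∃ M, ∀ i, |w 0 i| ≤ M) (hv0B : ∃ M, ∀ i, |v 0 i| ≤ M)
    (hwrec : ∀ n : ℕ, ∀ i : ℤ, w (n+1) i = schemeStep I W lam (w n) i)
    (hvrec : ∀ n : ℕ, ∀ i : ℤ, v (n+1) i = schemeStep I W lam (v n) i)
    (h0 : Summable (fun i : ℤ => |w 0 i - v 0 i|)) :
    ∀ n : ℕ, Summable (fun i : ℤ => |w n i - v n i|) ∧
      ∑' i : ℤ, |w n i - v n i| ≤ ∑' i : ℤ, |w 0 i - v 0 i| := by
  obtain ⟨hInn, hIanti, hIs, hI01, hItsum⟩ :=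
    aux_I Φ α Δz hα hΔz hΦnonneg hΦmono hΦmass I hI
  have hL0 : 0 ≤ L := le_trans (hW' 0).1 (hW' 0).2
  have hMono : Monotone W := monotone_of_deriv_nonneg hW (fun x => (hW' x).1)
  have hLip : ∀ x y : ℝ, |W x - W y| ≤ L * |x - y| := by
    have hlip : LipschitzWith L.toNNReal W := by
      apply lipschitzWith_of_nnnorm_deriv_le hW
      intro x
      rw [← NNReal.coe_le_coe, coe_nnnorm, Real.norm_eq_abs, Real.coe_toNNReal L hL0]
      exact abs_le.2 ⟨by linarith [(hW' x).1], (hW' x).2⟩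
    intro x y
    have := hlip.dist_le_mul x y
    rw [Real.dist_eq, Real.dist_eq, Real.coe_toNNReal L hL0] at this
    exact this
  have hlam0 : 0 ≤ lam := by rw [hlam]; positivity
  -- uniform bounds at every time step
  have hBdd : ∀ n : ℕ, ∃ M : ℝ, (∀ i, |w n i| ≤ M) ∧ (∀ i, |v n i| ≤ M) := by
    intro n
    induction n with
    | zero =>
      obtain ⟨Mw, hMw⟩ := hw0B; obtain ⟨Mv, hMv⟩ := hv0B
      exact ⟨max Mw Mv, fun i => le_trans (hMw i) (le_max_left _ _),
        fun i => le_trans (hMv i) (le_max_right _ _)⟩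
    | succ n ih =>
      obtain ⟨M, hMw, hMv⟩ := ih
      refine ⟨M + lam * (L * (2 * M)), fun i => ?_, fun i => ?_⟩
      · rw [hwrec n i]
        exact step_bdd I hInn hIs hItsum W L lam hL0 hLip hlam0 (w n) M hMw i
      · rw [hvrec n i]
        exact step_bdd I hInn hIs hItsum W L lam hL0 hLip hlam0 (v n) M hMv i
  intro n
  induction n with
  | zero => exact ⟨h0, le_refl _⟩
  | succ n ih =>
    obtain ⟨M, hMw, hMv⟩ := hBdd n
    have hstep := step_contract I hInn hIanti hIs hI01 W L lam hLip hMono hlam0 hCFL.2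
      (w n) (v n) M hMw hMv ih.1
    have heq : (fun i : ℤ => |w (n+1) i - v (n+1) i|)
        = fun i : ℤ => |schemeStep I W lam (w n) i - schemeStep I W lam (v n) i| := by
      funext i; rw [hwrec n i, hvrec n i]
    refine ⟨by rw [heq]; exact hstep.1, ?_⟩
    calc ∑' i : ℤ, |w (n+1) i - v (n+1) i|
        = ∑' i : ℤ, |schemeStep I W lam (w n) i - schemeStep I W lam (v n) i| := by rw [heq]
      _ ≤ ∑' i : ℤ, |w n i - v n i| := hstep.2
      _ ≤ ∑' i : ℤ, |w 0 i - v 0 i| := ih.2
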